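/- (Squaring) Let M > 0 and x ∈ ℝ^D with ‖x‖_∞ ≤ M. Let H ∈ ℝ^{5×ℓ} with ℓ ≥ 2D be the embedding matrix whose first row is (x¹,…,x^D, 0,…,0), second row zero, rows 3–4 positional encodings, fifth row all ones. Then there exist three transformer blocks B₁, B₂, B₃ ∈ 𝓑(D, 6, 5) such that B₃ ∘ B₂ ∘ B₁(H) equals H except that the first-row entries in columns D+1,…,2D are (x¹)²,…,(x^D)², with weight bound ‖θ_B‖_∞ ≤ O(ℓ² M² ‖H‖²_{∞,∞}) for each block. -/

import Mathlib

open scoped BigOperators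
open Metric Set MeasureTheory
open scoped Matrix

namespace Paper

noncomputable section

/-- ReLU activation. -/
def relu (x : ℝ) : ℝ := max x 0

/-- Euclidean space `ℝ^D` with the `ℓ²` norm. -/
abbrev Euc (D : ℕ) := EuclideanSpace ℝ (Fin D)

/-- Maximum absolute entry of a matrix (`‖H‖_{∞,∞}`). -/
def matSup {m n : ℕ} (H : Matrix (Fin m) (Fin n) ℝ) : ℝ := ⨆ i, ⨆ j, |H i j|

/-- Sup norm `‖x‖_∞` of a vector. -/
def supNorm {D : ℕ} (x : Fin D → ℝ) : ℝ := ⨆ i, |x i|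

/-- An attention head: query, key and value matrices. -/
structure Head (de : ℕ) where
  Q : Matrix (Fin de) (Fin de) ℝ
  K : Matrix (Fin de) (Fin de) ℝ
  V : Matrix (Fin de) (Fin de) ℝ

/-- Action of an attention head on an embedding matrix:
`A(H) = V H σ((K H)ᵀ Q H)` with `σ = ReLU`. -/
def Head.eval {de : ℕ} (A : Head de) {ℓ : ℕ} (H : Matrix (Fin de) (Fin ℓ) ℝ) :
    Matrix (Fin de) (Fin ℓ) ℝ :=
  A.V * H * ((A.K * H)ᵀ * (A.Q * H)).map relu

/-- Tokenwise action of an attention head: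
`A(h_t) = Σ_j σ(⟨Q h_t, K h_j⟩) V h_j`. -/
def Head.tokenEval {de ℓ : ℕ} (A : Head de) (H : Matrix (Fin de) (Fin ℓ) ℝ)
    (t : Fin ℓ) : Fin de → ℝ := fun i =>
  ∑ j : Fin ℓ,
    relu (∑ k, A.Q.mulVec (fun r => H r t) k * A.K.mulVec (fun r => H r j) k) *
      A.V.mulVec (fun r => H r j) i

/-- Maximum weight magnitude of an attention head. -/
def Head.wnorm {de : ℕ} (A : Head de) : ℝ := matSup A.Q ⊔ matSup A.K ⊔ matSup A.V

/-- A fully-connected (tokenwise) ReLU feed-forward network of depth `L`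
and hidden width `w` on embedding dimension `de`. -/
structure FFN (de w L : ℕ) where
  Win : Matrix (Fin w) (Fin de) ℝ
  bin : Fin w → ℝ
  Wmid : Fin L → Matrix (Fin w) (Fin w) ℝ
  bmid : Fin L → Fin w → ℝ
  Wout : Matrix (Fin de) (Fin w) ℝ
  bout : Fin de → ℝ

/-- Evaluation of a feed-forward ReLU network on one token. -/
def FFN.eval {de w L : ℕ} (f : FFN de w L) (x : Fin de → ℝ) : Fin de → ℝ :=
  let h0 : Fin w → ℝ := fun i => relu (∑ j, f.Win i j * x j + f.bin i)
  let hL : Fin w → ℝ := (List.finRange L).foldl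
    (fun h k => fun i => relu (∑ j, f.Wmid k i j * h j + f.bmid k i)) h0
  fun i => ∑ j, f.Wout i j * hL j + f.bout i

/-- Maximum weight magnitude of a feed-forward network. -/
def FFN.wnorm {de w L : ℕ} (f : FFN de w L) : ℝ :=
  matSup f.Win ⊔ (⨆ i, |f.bin i|) ⊔ (⨆ k, matSup (f.Wmid k)) ⊔
    (⨆ k, ⨆ i, |f.bmid k i|) ⊔ matSup f.Wout ⊔ (⨆ i, |f.bout i|)

/-- A two-layer feed-forward ReLU network. -/
structure TwoLayerFFN (de w : ℕ) where
  W1 : Matrix (Fin w) (Fin de) ℝ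
  b1 : Fin w → ℝ
  W2 : Matrix (Fin de) (Fin w) ℝ
  b2 : Fin de → ℝ

def TwoLayerFFN.eval {de w : ℕ} (f : TwoLayerFFN de w) (x : Fin de → ℝ) :
    Fin de → ℝ := fun i =>
  ∑ j, f.W2 i j * relu (∑ k, f.W1 j k * x k + f.b1 j) + f.b2 i

def TwoLayerFFN.wnorm {de w : ℕ} (f : TwoLayerFFN de w) : ℝ :=
  matSup f.W1 ⊔ (⨆ i, |f.b1 i|) ⊔ matSup f.W2 ⊔ (⨆ i, |f.b2 i|)

/-- A transformer block `B(H) = FFN(MHA(H)+H) + MHA(H) + H` with `m` attention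
heads and a tokenwise feed-forward network of depth `L` and width `w`;
this formalizes the class `𝓑(m, L, de)`. -/
structure Block (de m w L : ℕ) where
  heads : Fin m → Head de
  ffn : FFN de w L

def Block.eval {de m w L : ℕ} (B : Block de m w L) {ℓ : ℕ}
    (H : Matrix (Fin de) (Fin ℓ) ℝ) : Matrix (Fin de) (Fin ℓ) ℝ :=
  let H1 := (∑ j, (B.heads j).eval H) + H
  Matrix.of (fun i t => B.ffn.eval (fun r => H1 r t) i) + H1

def Block.wnorm {de m w L : ℕ} (B : Block de m w L) : ℝ :=
  (⨆ j, (B.heads j).wnorm) ⊔ B.ffn.wnorm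

/-- A transformer network: linear embedding, positional encoding, `LT` transformer
blocks (each with `mT` heads and FFNs of depth `LF`, width `wF`), and a decoding
layer returning the first entry of the last column. -/
structure TransformerNet (D LT mT de ℓ LF wF : ℕ) where
  emb : Fin de → Fin ℓ → Fin D → ℝ
  PE : Matrix (Fin de) (Fin ℓ) ℝ
  blocks : Fin LT → Block de mT wF LF

def TransformerNet.eval {D LT mT de ℓ LF wF : ℕ}
    (T : TransformerNet D LT mT de ℓ LF wF) (x : Fin D → ℝ) : ℝ :=
  let H0 : Matrix (Fin de) (Fin ℓ) ℝ :=
    T.PE + Matrix.of fun i t => ∑ j, T.emb i t j * x j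
  let HL := (List.finRange LT).foldl (fun H k => (T.blocks k).eval H) H0
  if h : 0 < de ∧ 0 < ℓ then HL ⟨0, h.1⟩ ⟨ℓ - 1, Nat.sub_lt h.2 Nat.one_pos⟩ else 0

/-- Maximum weight magnitude `‖θ‖_∞` of a transformer network. -/
def TransformerNet.wnorm {D LT mT de ℓ LF wF : ℕ}
    (T : TransformerNet D LT mT de ℓ LF wF) : ℝ :=
  (⨆ i, ⨆ t, ⨆ j, |T.emb i t j|) ⊔ matSup T.PE ⊔ (⨆ k, (T.blocks k).wnorm)

/-- Membership in the transformer class `𝒯(L_T, m_T, d_embed, ℓ, L_FFN, w_FFN, R, κ)`: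
sup-norm output bound `R` and weight magnitudes at most `κ`. -/
def TransformerNet.inClass {D LT mT de ℓ LF wF : ℕ}
    (T : TransformerNet D LT mT de ℓ LF wF) (R κ : ℝ) : Prop :=
  (∀ x : Fin D → ℝ, |T.eval x| ≤ R) ∧ T.wnorm ≤ κ

/-- Medial axis of a set. -/
def medialAxis {D : ℕ} (S : Set (Euc D)) : Set (Euc D) :=
  {x | ∃ p ∈ S, ∃ q ∈ S, p ≠ q ∧
    dist p x = infDist x S ∧ dist q x = infDist x S}

/-- Local reach `τ_M(v)`. -/
def localReach {D : ℕ} (S : Set (Euc D)) (v : Euc D) : ℝ :=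
  infDist v (medialAxis S)

/-- Reach `τ_M` of a set. -/
def reach {D : ℕ} (S : Set (Euc D)) : ℝ := ⨅ v ∈ S, localReach S v

/-- Geodesic distance on `S`: infimum of lengths of `C¹` curves in `S`. -/
def geoDist {D : ℕ} (S : Set (Euc D)) (v v' : Euc D) : ℝ :=
  sInf {l : ℝ | ∃ γ : ℝ → Euc D, (∀ t ∈ Icc (0:ℝ) 1, γ t ∈ S) ∧
    ContDiffOn ℝ 1 γ (Icc 0 1) ∧ γ 0 = v ∧ γ 1 = v' ∧
    l = ∫ t in (0:ℝ)..1, ‖deriv γ t‖}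

/-- Orthogonal projection onto `S` (a choice of nearest point, when one exists). -/
def projOn {D : ℕ} (S : Set (Euc D)) (x : Euc D) : Euc D :=
  Classical.epsilon fun y => y ∈ S ∧ dist x y = infDist x S

/-- A nonempty, compact, connected `d`-dimensional manifold `M ⊆ [0,1]^D`,
together with a choice of orthonormal tangent frames `P(v)`. -/
structure GoodManifold (D d : ℕ) where
  carrier : Set (Euc D)
  nonempty : carrier.Nonempty
  compact : IsCompact carrier
  connected : IsConnected carrier
  subset_cube : ∀ x ∈ carrier, ∀ i, x i ∈ Icc (0:ℝ) 1
  locallyEuclidean : ∀ v ∈ carrier, ∃ U : Set (Euc D), IsOpen U ∧ v ∈ U ∧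
    ∃ V : Set (EuclideanSpace ℝ (Fin d)), IsOpen V ∧
      Nonempty (↥(carrier ∩ U) ≃ₜ ↥V)
  frame : Euc D → Matrix (Fin D) (Fin d) ℝ
  frame_orthonormal : ∀ v ∈ carrier, (frame v)ᵀ * frame v = 1

/-- The tubular region `M(q)` around the manifold. -/
def GoodManifold.tube {D d : ℕ} (M : GoodManifold D d) (q : ℝ) : Set (Euc D) :=
  {x | ∃ v ∈ M.carrier, ∃ u : Euc D, x = v + u ∧
    (M.frame v)ᵀ.mulVec (fun i => u i) = 0 ∧
    ‖u‖ < q * localReach M.carrier v}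

/-- The volume `Vol(M)`: the `d`-dimensional Hausdorff measure of the carrier. -/
def vol {D d : ℕ} (M : GoodManifold D d) : ℝ :=
  (MeasureTheory.Measure.hausdorffMeasure (d : ℝ) M.carrier).toReal

/-- A maximal `δ`-separated net `{z₁,…,z_K}` of `M` w.r.t. geodesic distance. -/
structure SepNet {D d : ℕ} (M : GoodManifold D d) (δ : ℝ) (K : ℕ) where
  z : Fin K → Euc D
  mem : ∀ i, z i ∈ M.carrier
  sep : ∀ i j, i ≠ j → δ < geoDist M.carrier (z i) (z j)
  maximal : ∀ y ∈ M.carrier, ∃ i, geoDist M.carrier y (z i) ≤ δ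

/-- The bump functions `η̃_i` built from the net, with `p = (1+q)/2` and
`h = 6/(1 - q p⁻¹)`. -/
def etaTilde {D d K : ℕ} (M : GoodManifold D d) (q δ : ℝ) (N : SepNet M δ K)
    (i : Fin K) (x : Euc D) : ℝ :=
  relu (1 - (dist x (N.z i) / (((1 + q) / 2) * localReach M.carrier (N.z i))) ^ 2
    - (Real.sqrt (∑ j, (∑ r, M.frame (N.z i) r j * (x r - N.z i r)) ^ 2)
        / ((6 / (1 - q / ((1 + q) / 2))) * δ)) ^ 2)

/-- The normalized partition of unity `η_i = η̃_i / ‖η̃‖₁`. -/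
def etaFun {D d K : ℕ} (M : GoodManifold D d) (q δ : ℝ) (N : SepNet M δ K)
    (i : Fin K) (x : Euc D) : ℝ :=
  etaTilde M q δ N i x / ∑ j, etaTilde M q δ N j x

/-- Embedding matrix predicate for `d_embed = 5`: second row zero, rows 3–4 the
sinusoidal positional encodings, fifth row all ones. -/
def IsEmbed5 {ℓ : ℕ} (H : Matrix (Fin 5) (Fin ℓ) ℝ) : Prop :=
  (∀ t, H 1 t = 0) ∧
  (∀ t : Fin ℓ, H 2 t = Real.cos ((((t : ℕ) : ℝ) + 1) * Real.pi / (2 * ℓ))) ∧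
  (∀ t : Fin ℓ, H 3 t = Real.sin ((((t : ℕ) : ℝ) + 1) * Real.pi / (2 * ℓ))) ∧
  (∀ t, H 4 t = 1)

/-- Embedding matrix predicate for general `d_embed = e + 5 ≥ 5`: rows
`d_embed−2, d_embed−1` are the positional encodings and the last row is all ones. -/
def IsEmbedG (e ℓ : ℕ) (H : Matrix (Fin (e + 5)) (Fin ℓ) ℝ) : Prop :=
  (∀ t : Fin ℓ, H ⟨e + 2, by omega⟩ t
      = Real.cos ((((t : ℕ) : ℝ) + 1) * Real.pi / (2 * ℓ))) ∧
  (∀ t : Fin ℓ, H ⟨e + 3, by omega⟩ t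
      = Real.sin ((((t : ℕ) : ℝ) + 1) * Real.pi / (2 * ℓ))) ∧
  (∀ t, H ⟨e + 4, by omega⟩ t = 1)

/-! ### Auxiliary lemmas for the squaring construction -/

lemma relu_nonneg (x : ℝ) : 0 ≤ relu x := le_max_right _ _
lemma relu_of_nonneg {x : ℝ} (h : 0 ≤ x) : relu x = x := max_eq_left h
lemma relu_of_nonpos {x : ℝ} (h : x ≤ 0) : relu x = 0 := max_eq_right h
lemma relu_const_mul {c : ℝ} (hc : 0 ≤ c) (y : ℝ) : relu (c * y) = c * relu y := by
  rcases le_total 0 y with h | h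
  · rw [relu_of_nonneg (by positivity), relu_of_nonneg h]
  · rw [relu_of_nonpos (mul_nonpos_of_nonneg_of_nonpos hc h), relu_of_nonpos h, mul_zero]
lemma self_mul_relu (y : ℝ) : y * relu y = relu y ^ 2 := by
  rcases le_total 0 y with h | h
  · rw [relu_of_nonneg h]; ring
  · rw [relu_of_nonpos h]; ring
lemma relu_sq_add_relu_neg_sq (y : ℝ) : relu y ^ 2 + relu (-y) ^ 2 = y ^ 2 := by
  rcases le_total 0 y with h | h
  · rw [relu_of_nonneg h, relu_of_nonpos (by linarith)]; ring
  · rw [relu_of_nonpos h, relu_of_nonneg (by linarith)]; ring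

/-- Positional angle. -/
def posang (ℓ t : ℕ) : ℝ := ((t:ℝ)+1) * Real.pi / (2*(ℓ:ℝ))

lemma cos_gap {ℓ : ℕ} (a b : ℕ) (ha : a < ℓ) (hb : b < ℓ) (hab : a ≠ b) :
    Real.cos (posang ℓ a - posang ℓ b) ≤ 1 - 1/(4*(ℓ:ℝ)^2) := by
  have hl0 : 0 < ℓ := by omega
  have hl : (0:ℝ) < ℓ := by exact_mod_cast hl0
  have hpi := Real.pi_gt_three
  have hpi4 : Real.pi < 3.15 := Real.pi_lt_d2
  set δ : ℝ := posang ℓ a - posang ℓ b with hδ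
  have h1 : (1:ℝ) ≤ |(a:ℝ) - (b:ℝ)| := by
    rcases Nat.lt_or_ge a b with h | h
    · have : (a:ℝ) + 1 ≤ b := by exact_mod_cast h
      rw [abs_sub_comm, abs_of_nonneg (by linarith)]; linarith
    · have h' : b < a := lt_of_le_of_ne h (Ne.symm hab)
      have : (b:ℝ) + 1 ≤ a := by exact_mod_cast h'
      rw [abs_of_nonneg (by linarith)]; linarith
  have h2 : |(a:ℝ) - (b:ℝ)| ≤ (ℓ:ℝ) := by
    have ha' : (a:ℝ) < ℓ := by exact_mod_cast ha
    have hb' : (b:ℝ) < ℓ := by exact_mod_cast hb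
    have ha0 : (0:ℝ) ≤ a := Nat.cast_nonneg a
    have hb0 : (0:ℝ) ≤ b := Nat.cast_nonneg b
    rw [abs_le]; constructor <;> linarith
  have habs : |δ| = |(a:ℝ) - b| * Real.pi / (2*(ℓ:ℝ)) := by
    have hδval : δ = (((a:ℝ) - b) * Real.pi) / (2*(ℓ:ℝ)) := by
      rw [hδ]; unfold posang; ring
    rw [hδval, abs_div, abs_mul, abs_of_pos Real.pi_pos,
      abs_of_pos (by linarith : (0:ℝ) < 2*(ℓ:ℝ))]
  set y : ℝ := |δ| / 2 with hy
  have hyval : y = |(a:ℝ)-b| * Real.pi / (4*(ℓ:ℝ)) := by rw [hy, habs]; ring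
  have hy4l : 3 ≤ y * (4*(ℓ:ℝ)) := by
    have hh : y * (4*(ℓ:ℝ)) = |(a:ℝ)-b| * Real.pi := by rw [hyval]; field_simp
    rw [hh]; nlinarith
  have hypos : 0 < y := by nlinarith
  have hy1 : y ≤ 1 := by
    rw [hyval, div_le_one (by positivity)]
    nlinarith [mul_le_mul_of_nonneg_right h2 Real.pi_pos.le,
      mul_le_mul_of_nonneg_left hpi4.le (le_of_lt hl)]
  have hsin := Real.sin_gt_sub_cube hypos
  have hysq : y^2 ≤ 1 := by nlinarith
  have hsin2 : y/2 ≤ Real.sin y := by nlinarith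
  have hcos : Real.cos |δ| = 1 - 2 * Real.sin y ^ 2 := by
    have h2y : |δ| = 2 * y := by rw [hy]; ring
    rw [h2y, Real.cos_two_mul, Real.sin_sq]; ring
  have hsinn : 0 ≤ Real.sin y := le_trans (by positivity) hsin2
  have hcosle : Real.cos δ ≤ 1 - y^2/2 := by
    rw [← Real.cos_abs, hcos]; nlinarith
  have hfin : 1/(4*(ℓ:ℝ)^2) ≤ y^2/2 := by
    rw [div_le_div_iff₀ (by positivity) (by norm_num)]
    nlinarith [mul_le_mul hy4l hy4l (by norm_num) (by positivity)]
  linarith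

lemma le_matSup {m n : ℕ} (H : Matrix (Fin m) (Fin n) ℝ) (i : Fin m) (j : Fin n) :
    |H i j| ≤ matSup H := by
  have h1 : |H i j| ≤ ⨆ j', |H i j'| :=
    le_ciSup (f := fun j' => |H i j'|) (Set.finite_range _).bddAbove j
  exact h1.trans
    (le_ciSup (f := fun i => ⨆ j', |H i j'|) (Set.finite_range _).bddAbove i)

lemma matSup_le {m n : ℕ} [Nonempty (Fin m)] [Nonempty (Fin n)]
    {H : Matrix (Fin m) (Fin n) ℝ} {c : ℝ} (h : ∀ i j, |H i j| ≤ c) : matSup H ≤ c :=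
  ciSup_le fun i => ciSup_le fun j => h i j

lemma le_supNorm {D : ℕ} (x : Fin D → ℝ) (i : Fin D) : |x i| ≤ supNorm x :=
  le_ciSup (f := fun i => |x i|) (Set.finite_range _).bddAbove i

lemma head_apply {ℓ : ℕ} (A : Head 5) (H : Matrix (Fin 5) (Fin ℓ) ℝ) (i : Fin 5) (t : Fin ℓ) :
    A.eval H i t = ∑ j' : Fin ℓ, (∑ r, A.V i r * H r j') *
      relu (∑ k, (∑ r, A.K k r * H r j') * (∑ r, A.Q k r * H r t)) := by
  simp only [Head.eval, Matrix.mul_apply, Matrix.map_apply, Matrix.transpose_apply]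

lemma zero_head_eval {ℓ : ℕ} (H : Matrix (Fin 5) (Fin ℓ) ℝ) :
    (Head.mk 0 0 0 : Head 5).eval H = 0 := by
  simp [Head.eval]

/-- The attention head used in the squaring construction. -/
def mkHead (D ℓ : ℕ) (M ε lam g μ : ℝ) (j : ℕ) : Head 5 where
  Q := Matrix.of fun a b =>
    if a = 1 then (if b = 2 then g else 0)
    else if a = 2 then (if b = 3 then g else 0)
    else (if b = 4 then g else 0)
  K := Matrix.of fun a b =>
    if a = 0 then (if b = 0 then ε*lam/g else if b = 4 then -(8*lam*M*(ℓ:ℝ)^2)/g else 0)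
    else if a = 1 then (if b = 4 then 4*lam*M*(ℓ:ℝ)^2*Real.cos (posang ℓ (D+j))/g else 0)
    else if a = 2 then (if b = 4 then 4*lam*M*(ℓ:ℝ)^2*Real.sin (posang ℓ (D+j))/g else 0)
    else if a = 3 then (if b = 2 then 4*lam*M*(ℓ:ℝ)^2*Real.cos (posang ℓ j)/g else 0)
    else (if b = 3 then 4*lam*M*(ℓ:ℝ)^2*Real.sin (posang ℓ j)/g else 0)
  V := Matrix.of fun a b => if a = 1 ∧ b = 0 then ε*μ else 0

lemma mkHead_eval (D ℓ : ℕ) (hD : 0 < D) (hl : 2*D ≤ ℓ) (M : ℝ) (hM : 0 < M)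
    (x : Fin D → ℝ) (hx : ∀ i, |x i| ≤ M) (ε lam g μ : ℝ)
    (hε : |ε| ≤ 1) (hlam : 0 < lam) (hg : 0 < g) (j : Fin D)
    (H' : Matrix (Fin 5) (Fin ℓ) ℝ)
    (h0lt : ∀ t : Fin ℓ, ∀ h : (t:ℕ) < D, H' 0 t = x ⟨t, h⟩)
    (h0ge : ∀ t : Fin ℓ, D ≤ (t:ℕ) → H' 0 t = 0)
    (h2 : ∀ t : Fin ℓ, H' 2 t = Real.cos (posang ℓ t))
    (h3 : ∀ t : Fin ℓ, H' 3 t = Real.sin (posang ℓ t))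
    (h4 : ∀ t : Fin ℓ, H' 4 t = 1) :
    (mkHead D ℓ M ε lam g μ j).eval H' = Matrix.of fun (i : Fin 5) (t : Fin ℓ) =>
      if i = 1 ∧ (t:ℕ) = D + (j:ℕ) then lam * μ * relu (ε * x j)^2 else 0 := by
  have hl0 : 0 < ℓ := by omega
  set R : ℝ := 4*lam*M*(ℓ:ℝ)^2 with hR
  have hRpos : 0 < R := by rw [hR]; positivity
  have score : ∀ (j' t : Fin ℓ),
      (∑ k, (∑ r, (mkHead D ℓ M ε lam g μ j).K k r * H' r j') *
        (∑ r, (mkHead D ℓ M ε lam g μ j).Q k r * H' r t))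
      = ε*lam*H' 0 j' - 2*R + R * Real.cos (posang ℓ t - posang ℓ (D+(j:ℕ)))
        + R * Real.cos (posang ℓ j' - posang ℓ (j:ℕ)) := by
    intro j' t
    rw [hR]
    simp [mkHead, Fin.sum_univ_five, h2, h3, h4, Real.cos_sub]
    field_simp
    ring
  have sup : ∀ (j' t : Fin ℓ), ¬((t:ℕ) = D + (j:ℕ) ∧ (j':ℕ) = (j:ℕ)) →
      ε*lam*H' 0 j' - 2*R + R * Real.cos (posang ℓ t - posang ℓ (D+(j:ℕ)))
        + R * Real.cos (posang ℓ j' - posang ℓ (j:ℕ)) ≤ 0 := by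
    intro j' t hcond
    have hH0 : |H' 0 j'| ≤ M := by
      by_cases h : (j':ℕ) < D
      · rw [h0lt j' h]; exact hx _
      · rw [h0ge j' (by omega)]; simpa using hM.le
    have hterm1 : ε*lam*H' 0 j' ≤ lam*M := by
      calc ε*lam*H' 0 j' ≤ |ε*lam*H' 0 j'| := le_abs_self _
        _ = |ε| * lam * |H' 0 j'| := by rw [abs_mul, abs_mul, abs_of_pos hlam]
        _ ≤ 1*lam*M := by
            apply mul_le_mul (by nlinarith [abs_nonneg ε]) hH0 (abs_nonneg _)
            positivity
        _ = lam*M := by ring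
    have hone : ∀ u : ℝ, R * Real.cos u ≤ R :=
      fun u => by nlinarith [Real.cos_le_one u, hRpos]
    by_cases ht : (t:ℕ) = D + (j:ℕ)
    · have hj' : (j':ℕ) ≠ (j:ℕ) := fun h => hcond ⟨ht, h⟩
      have hB := cos_gap (ℓ := ℓ) (j':ℕ) (j:ℕ) j'.isLt (by omega) hj'
      have hRB : R * Real.cos (posang ℓ j' - posang ℓ (j:ℕ)) ≤ R - lam*M := by
        have h1 : R * Real.cos (posang ℓ j' - posang ℓ (j:ℕ)) ≤ R * (1 - 1/(4*(ℓ:ℝ)^2)) :=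
          mul_le_mul_of_nonneg_left hB hRpos.le
        have h2 : R * (1 - 1/(4*(ℓ:ℝ)^2)) = R - lam*M := by
          rw [hR]; have : ((ℓ:ℝ)) ≠ 0 := by positivity
          field_simp
        linarith
      linarith [hone (posang ℓ t - posang ℓ (D+(j:ℕ)))]
    · have hA := cos_gap (ℓ := ℓ) (t:ℕ) (D+(j:ℕ)) t.isLt (by omega) ht
      have hRA : R * Real.cos (posang ℓ t - posang ℓ (D+(j:ℕ))) ≤ R - lam*M := by
        have h1 : R * Real.cos (posang ℓ t - posang ℓ (D+(j:ℕ))) ≤ R * (1 - 1/(4*(ℓ:ℝ)^2)) :=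
          mul_le_mul_of_nonneg_left hA hRpos.le
        have h2 : R * (1 - 1/(4*(ℓ:ℝ)^2)) = R - lam*M := by
          rw [hR]; have : ((ℓ:ℝ)) ≠ 0 := by positivity
          field_simp
        linarith
      linarith [hone (posang ℓ j' - posang ℓ (j:ℕ))]
  ext i t
  rw [head_apply, Matrix.of_apply]
  by_cases hi : i = 1
  · subst hi
    have hrow : ∀ j' : Fin ℓ, (∑ r, (mkHead D ℓ M ε lam g μ j).V 1 r * H' r j')
        = ε*μ*H' 0 j' := by
      intro j'
      simp [mkHead, Fin.sum_univ_five]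
    by_cases ht : (t:ℕ) = D + (j:ℕ)
    · rw [if_pos ⟨rfl, ht⟩]
      have hjlt : (j:ℕ) < ℓ := by omega
      rw [Finset.sum_eq_single (⟨(j:ℕ), hjlt⟩ : Fin ℓ)]
      · rw [hrow, score]
        have hx0 : H' 0 ⟨(j:ℕ), hjlt⟩ = x j := by
          rw [h0lt ⟨(j:ℕ), hjlt⟩ j.isLt]
        have e1 : posang ℓ (t:ℕ) = posang ℓ (D+(j:ℕ)) := by rw [ht]
        have e2 : posang ℓ ((⟨(j:ℕ), hjlt⟩ : Fin ℓ):ℕ) = posang ℓ (j:ℕ) := rfl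
        rw [hx0, e1, e2]
        simp only [sub_self, Real.cos_zero]
        have hsimp : ε*lam*x j - 2*R + R*1 + R*1 = lam * (ε * x j) := by ring
        rw [hsimp, relu_const_mul hlam.le]
        linear_combination (lam*μ) * self_mul_relu (ε * x j)
      · intro j'' _ hne
        have hne' : (j'':ℕ) ≠ (j:ℕ) := fun h => hne (Fin.ext h)
        rw [hrow, score, relu_of_nonpos (sup j'' t (fun hc => hne' hc.2)), mul_zero]
      · intro h; exact absurd (Finset.mem_univ _) h
    · rw [if_neg (fun hc => ht hc.2)]
      apply Finset.sum_eq_zero; intro j'' _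
      rw [hrow, score, relu_of_nonpos (sup j'' t (fun hc => ht hc.1)), mul_zero]
  · have hrow : ∀ j' : Fin ℓ, (∑ r, (mkHead D ℓ M ε lam g μ j).V i r * H' r j') = 0 := by
      intro j'
      fin_cases i <;>
        [skip; exact absurd rfl hi; skip; skip; skip] <;>
        simp [mkHead, Fin.sum_univ_five]
    rw [if_neg (fun hc => hi hc.1)]
    apply Finset.sum_eq_zero; intro j'' _
    rw [hrow, zero_mul]


/-- The all-zero feed-forward network. -/
def ffnZero (w : ℕ) : FFN 5 w 6 := ⟨0, 0, fun _ => 0, fun _ => 0, 0, 0⟩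

lemma ffnZero_eval (w : ℕ) (v : Fin 5 → ℝ) : (ffnZero w).eval v = fun _ => 0 := by
  funext i
  show (∑ j, (ffnZero w).Wout i j * _ + (ffnZero w).bout i) = 0
  simp [ffnZero]

/-- The feed-forward network of the third block. -/
def ffnSq (N : ℕ) (g u0 u1 : ℝ) : FFN 5 N 6 where
  Win := Matrix.of fun _ b => if b = 1 then g else 0
  bin := 0
  Wmid := fun _ => Matrix.of fun _ _ => g
  bmid := fun _ => 0
  Wout := Matrix.of fun a _ => if a = 0 then u0 else if a = 1 then -u1 else 0
  bout := 0

lemma foldl_relu_const (N : ℕ) (g : ℝ) (hg : 0 ≤ g) (l : List (Fin 6)) :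
    ∀ v : ℝ, 0 ≤ v →
      l.foldl (fun (h : Fin N → ℝ) (_ : Fin 6) => fun (_ : Fin N) => relu (∑ j, g * h j))
          (fun _ => v)
        = fun _ => ((N:ℝ)*g)^l.length * v := by
  induction l with
  | nil => intro v hv; funext i; simp
  | cons k l ih =>
    intro v hv
    have hstep : (fun (_ : Fin N) => relu (∑ j : Fin N, g * (fun (_ : Fin N) => v) j))
        = fun (_ : Fin N) => ((N:ℝ)*g)*v := by
      funext i
      show relu (∑ _j : Fin N, g * v) = _
      rw [Finset.sum_const, Finset.card_univ, Fintype.card_fin, nsmul_eq_mul,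
        relu_of_nonneg (by positivity)]
      ring
    rw [List.foldl_cons, hstep, ih (((N:ℝ)*g)*v) (by positivity), List.length_cons]
    funext i
    rw [pow_succ]
    ring

lemma ffnSq_eval (N : ℕ) (g u0 u1 : ℝ) (hg : 0 ≤ g) (v : Fin 5 → ℝ) (hv : 0 ≤ v 1) :
    (ffnSq N g u0 u1).eval v = fun i : Fin 5 =>
      if i = 0 then u0 * ((N:ℝ)^7 * g^7 * v 1)
      else if i = 1 then -(u1 * ((N:ℝ)^7 * g^7 * v 1)) else 0 := by
  have hWin : (fun i' : Fin N =>
      relu (∑ j', (ffnSq N g u0 u1).Win i' j' * v j' + (ffnSq N g u0 u1).bin i'))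
      = fun _ => g * v 1 := by
    funext i'
    have : (∑ j', (ffnSq N g u0 u1).Win i' j' * v j' + (ffnSq N g u0 u1).bin i') = g * v 1 := by
      simp [ffnSq, Fin.sum_univ_five]
    rw [this]
    exact relu_of_nonneg (mul_nonneg hg hv)
  have hmid : (fun (h : Fin N → ℝ) (k : Fin 6) => fun (i' : Fin N) =>
      relu (∑ j', (ffnSq N g u0 u1).Wmid k i' j' * h j' + (ffnSq N g u0 u1).bmid k i'))
      = fun (h : Fin N → ℝ) (_ : Fin 6) => fun (_ : Fin N) => relu (∑ j, g * h j) := by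
    funext h k i'
    simp [ffnSq]
  funext i
  show (∑ j, (ffnSq N g u0 u1).Wout i j *
      ((List.finRange 6).foldl
        (fun (h : Fin N → ℝ) (k : Fin 6) => fun (i' : Fin N) =>
          relu (∑ j', (ffnSq N g u0 u1).Wmid k i' j' * h j' + (ffnSq N g u0 u1).bmid k i'))
        (fun i' : Fin N =>
          relu (∑ j', (ffnSq N g u0 u1).Win i' j' * v j' + (ffnSq N g u0 u1).bin i'))) j)
    + (ffnSq N g u0 u1).bout i = _
  rw [hWin, hmid, foldl_relu_const N g hg _ _ (mul_nonneg hg hv), List.length_finRange]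
  have hbout : (ffnSq N g u0 u1).bout i = 0 := rfl
  have hWout : ∀ j : Fin N, (ffnSq N g u0 u1).Wout i j
      = if i = 0 then u0 else if i = 1 then -u1 else 0 := fun _ => rfl
  simp only [hbout, hWout, add_zero, Finset.sum_const, Finset.card_univ, Fintype.card_fin,
    nsmul_eq_mul]
  split_ifs <;> ring


lemma block_eval_apply {m w L : ℕ} (B : Block 5 m w L) {ℓ : ℕ}
    (H : Matrix (Fin 5) (Fin ℓ) ℝ) (i : Fin 5) (t : Fin ℓ) :
    B.eval H i t
      = B.ffn.eval (fun r => ((∑ j, (B.heads j).eval H) + H) r t) i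
        + ((∑ j, (B.heads j).eval H) + H) i t := rfl

lemma matSup_zero {m n : ℕ} [Nonempty (Fin m)] [Nonempty (Fin n)] :
    matSup (0 : Matrix (Fin m) (Fin n) ℝ) = 0 := by
  simp [matSup, ciSup_const]

lemma ffnZero_wnorm (w : ℕ) (hw : 0 < w) : (ffnZero w).wnorm ≤ 0 := by
  haveI : Nonempty (Fin w) := ⟨⟨0, hw⟩⟩
  unfold FFN.wnorm
  simp [ffnZero, matSup_zero, ciSup_const]

lemma mkHead_wnorm (D ℓ : ℕ) (M ε lam KK : ℝ) (j : ℕ) (hM : 0 < M) (hK : 0 < KK)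
    (hε : |ε| = 1) (hlam : 0 < lam) (hlK : lam ≤ KK^2)
    (hlE : 8*lam*M*(ℓ:ℝ)^2 ≤ KK^2) :
    (mkHead D ℓ M ε lam KK KK j).wnorm ≤ KK := by
  have hl2 : (0:ℝ) ≤ (ℓ:ℝ)^2 := by positivity
  have hcos1 := Real.abs_cos_le_one (posang ℓ (D+j))
  have hcos2 := Real.abs_cos_le_one (posang ℓ j)
  have hsin1 := Real.abs_sin_le_one (posang ℓ (D+j))
  have hsin2 := Real.abs_sin_le_one (posang ℓ j)
  have habs : ∀ u : ℝ, |u| ≤ 1 → |4*lam*M*(ℓ:ℝ)^2*u/KK| ≤ KK := by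
    intro u hu
    rw [abs_div, abs_of_pos hK, div_le_iff₀ hK, abs_mul]
    have h1 : |4*lam*M*(ℓ:ℝ)^2| = 4*lam*M*(ℓ:ℝ)^2 := abs_of_nonneg (by positivity)
    rw [h1]
    nlinarith [abs_nonneg u,
      mul_nonneg (by positivity : (0:ℝ) ≤ 4*lam*M*(ℓ:ℝ)^2) (by linarith : 0 ≤ 1 - |u|)]
  unfold Head.wnorm
  refine sup_le (sup_le (matSup_le ?_) (matSup_le ?_)) (matSup_le ?_) <;> intro a b <;>
    simp only [mkHead, Matrix.of_apply] <;> split_ifs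
  -- Q entries
  · rw [abs_of_pos hK]
  · simp [hK.le]
  · rw [abs_of_pos hK]
  · simp [hK.le]
  · rw [abs_of_pos hK]
  · simp [hK.le]
  -- K entries
  · -- ε*lam/KK
    rw [abs_div, abs_mul, hε, one_mul, abs_of_pos hlam, abs_of_pos hK, div_le_iff₀ hK]
    nlinarith
  · -- -(8 lam M ℓ²)/KK
    rw [abs_div, abs_neg, abs_of_pos hK, div_le_iff₀ hK]
    rw [abs_of_nonneg (by positivity)]
    nlinarith
  · simp [hK.le]
  · exact habs _ hcos1
  · simp [hK.le]
  · exact habs _ hsin1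
  · simp [hK.le]
  · exact habs _ hcos2
  · simp [hK.le]
  · exact habs _ hsin2
  · simp [hK.le]
  -- V entries
  · rw [abs_mul, hε, one_mul, abs_of_pos hK]
  · simp [hK.le]

lemma ffnSq_wnorm (N : ℕ) (hN : 0 < N) (KK u0 u1 : ℝ) (hK : 0 < KK)
    (h0 : |u0| ≤ KK) (h1 : |u1| ≤ KK) : (ffnSq N KK u0 u1).wnorm ≤ KK := by
  haveI : Nonempty (Fin N) := ⟨⟨0, hN⟩⟩
  unfold FFN.wnorm
  refine sup_le (sup_le (sup_le (sup_le (sup_le (matSup_le ?_) ?_) ?_) ?_) (matSup_le ?_)) ?_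
  · intro i j
    simp only [ffnSq, Matrix.of_apply]
    split_ifs
    · rw [abs_of_pos hK]
    · simp [hK.le]
  · refine ciSup_le fun i => ?_
    simp [ffnSq, hK.le]
  · refine ciSup_le fun k => matSup_le fun i j => ?_
    simp only [ffnSq, Matrix.of_apply]
    rw [abs_of_pos hK]
  · refine ciSup_le fun k => ciSup_le fun i => ?_
    simp [ffnSq, hK.le]
  · intro i j
    simp only [ffnSq, Matrix.of_apply]
    split_ifs
    · exact h0
    · rwa [abs_neg]
    · simp [hK.le]
  · refine ciSup_le fun i => ?_
    simp [ffnSq, hK.le]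

/-- Lemma: componentwise squaring implemented by three transformer
blocks. -/
theorem squaring :
    ∃ C : ℝ, 0 < C ∧
      ∀ (D ℓ : ℕ), 2 * D ≤ ℓ →
      ∀ M : ℝ, 0 < M →
      ∀ x : Fin D → ℝ, supNorm x ≤ M →
      ∀ H : Matrix (Fin 5) (Fin ℓ) ℝ, IsEmbed5 H →
        (∀ t : Fin ℓ, ∀ h : (t : ℕ) < D, H 0 t = x ⟨(t : ℕ), h⟩) →
        (∀ t : Fin ℓ, D ≤ (t : ℕ) → H 0 t = 0) →
        ∃ (w : ℕ) (B₁ B₂ B₃ : Block 5 D w 6),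
          B₁.wnorm ≤ C * (ℓ : ℝ) ^ 2 * M ^ 2 * matSup H ^ 2 ∧
          B₂.wnorm ≤ C * (ℓ : ℝ) ^ 2 * M ^ 2 * matSup H ^ 2 ∧
          B₃.wnorm ≤ C * (ℓ : ℝ) ^ 2 * M ^ 2 * matSup H ^ 2 ∧
          B₃.eval (B₂.eval (B₁.eval H)) = Matrix.of fun (i : Fin 5) (t : Fin ℓ) =>
            if h : D ≤ (t : ℕ) ∧ (t : ℕ) < 2 * D then
              (if i = 0 then x ⟨(t : ℕ) - D, by omega⟩ ^ 2 else H i t)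
            else H i t := by
  refine ⟨1, one_pos, ?_⟩
  intro D ℓ hl M hM x hx H hE h0lt h0ge
  obtain ⟨hrow1, hrow2, hrow3, hrow4⟩ := hE
  have h2 : ∀ t : Fin ℓ, H 2 t = Real.cos (posang ℓ (t:ℕ)) := fun t => hrow2 t
  have h3 : ∀ t : Fin ℓ, H 3 t = Real.sin (posang ℓ (t:ℕ)) := fun t => hrow3 t
  by_cases hD0 : D = 0
  · subst hD0
    have hwz : (Block.mk (fun j : Fin 0 => j.elim0) (ffnZero 1) : Block 5 0 1 6).wnorm
        ≤ 1 * (ℓ:ℝ)^2 * M^2 * matSup H^2 := by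
      refine le_trans (sup_le (le_of_eq (Real.iSup_of_isEmpty _))
        (ffnZero_wnorm 1 one_pos)) (by positivity)
    have hid : ∀ H' : Matrix (Fin 5) (Fin ℓ) ℝ,
        (Block.mk (fun j : Fin 0 => j.elim0) (ffnZero 1) : Block 5 0 1 6).eval H' = H' := by
      intro H'
      ext i t
      rw [block_eval_apply]
      simp only [Finset.univ_eq_empty, Finset.sum_empty, zero_add]
      rw [ffnZero_eval]
      simp
    refine ⟨1, ⟨fun j => j.elim0, ffnZero 1⟩, ⟨fun j => j.elim0, ffnZero 1⟩,
      ⟨fun j => j.elim0, ffnZero 1⟩, hwz, hwz, hwz, ?_⟩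
    rw [hid, hid, hid]
    ext i t
    rw [Matrix.of_apply, dif_neg (by omega)]
  · have hD : 0 < D := Nat.pos_of_ne_zero hD0
    haveI : Nonempty (Fin D) := ⟨⟨0, hD⟩⟩
    have hlpos : 0 < ℓ := by omega
    have hxM : ∀ i, |x i| ≤ M := fun i => (le_supNorm x i).trans hx
    have hS1 : (1:ℝ) ≤ matSup H := by
      have h := le_matSup H 4 ⟨0, hlpos⟩
      rw [hrow4 ⟨0, hlpos⟩] at h
      simpa using h
    set S := matSup H with hS
    set K := (ℓ:ℝ)^2 * M^2 * S^2 with hKdef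
    have hlR : (0:ℝ) < ℓ := by exact_mod_cast hlpos
    have hS2 : (1:ℝ) ≤ S^2 := by nlinarith
    have hK : 0 < K := by
      rw [hKdef]
      have h0 : (0:ℝ) < (ℓ:ℝ)^2*M^2 := by positivity
      nlinarith
    set E := 8*M*(ℓ:ℝ)^2 with hEdef
    have hEpos : 0 < E := by rw [hEdef]; positivity
    set lam := K^2/(E+1) with hlamdef
    have hlam : 0 < lam := by rw [hlamdef]; positivity
    have hlamE : lam * (E+1) = K^2 := by rw [hlamdef]; field_simp
    have hlK : lam ≤ K^2 := by nlinarith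
    have hlE8 : 8*lam*M*(ℓ:ℝ)^2 ≤ K^2 := by
      have : 8*lam*M*(ℓ:ℝ)^2 = lam * E := by rw [hEdef]; ring
      rw [this]
      nlinarith
    set cc := 1/(lam*K) with hccdef
    have hccpos : 0 < cc := by rw [hccdef]; positivity
    have hccId : cc * (lam*K) = 1 := by rw [hccdef]; field_simp
    obtain ⟨N0, hN0⟩ := exists_nat_ge ((cc+1)/K^8)
    set N := max N0 1 with hNdef
    have hNpos : 0 < N := by omega
    have hN1 : (1:ℝ) ≤ (N:ℝ) := by exact_mod_cast (by omega : 1 ≤ N)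
    have hT : (0:ℝ) < (N:ℝ)^7 * K^7 := by positivity
    set u0 := cc/((N:ℝ)^7*K^7) with hu0def
    set u1 := 1/((N:ℝ)^7*K^7) with hu1def
    have hTge : (cc+1)/K ≤ (N:ℝ)^7*K^7 := by
      have hN7 : (N:ℝ) ≤ (N:ℝ)^7 := le_self_pow₀ hN1 (by norm_num)
      have hNge : (cc+1)/K^8 ≤ (N:ℝ) := by
        refine le_trans hN0 ?_
        exact_mod_cast Nat.cast_le.mpr (le_max_left N0 1)
      have h1 : (cc+1)/K^8 ≤ (N:ℝ)^7 := le_trans hNge hN7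
      calc (cc+1)/K = ((cc+1)/K^8) * K^7 := by field_simp
        _ ≤ (N:ℝ)^7 * K^7 := mul_le_mul_of_nonneg_right h1 (by positivity)
    have hKT := mul_le_mul_of_nonneg_left hTge hK.le
    have hid2 : K * ((cc+1)/K) = cc + 1 := by field_simp
    have hu0b : |u0| ≤ K := by
      rw [hu0def, abs_of_pos (by positivity), div_le_iff₀ hT]
      linarith [hKT, hid2, hccpos]
    have hu1b : |u1| ≤ K := by
      rw [hu1def, abs_of_pos (by positivity), div_le_iff₀ hT]
      linarith [hKT, hid2, hccpos]
    have hu0T : u0 * ((N:ℝ)^7*K^7) = cc := by rw [hu0def]; field_simp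
    have hu1T : u1 * ((N:ℝ)^7*K^7) = 1 := by rw [hu1def]; field_simp
    have hRHS : (1:ℝ) * (ℓ:ℝ)^2 * M^2 * S^2 = K := by rw [hKdef]; ring
    -- the sum of the heads
    have hsum : ∀ (ε : ℝ), |ε| ≤ 1 → ∀ (H' : Matrix (Fin 5) (Fin ℓ) ℝ),
        (∀ t : Fin ℓ, ∀ h : (t:ℕ) < D, H' 0 t = x ⟨(t:ℕ), h⟩) →
        (∀ t : Fin ℓ, D ≤ (t:ℕ) → H' 0 t = 0) →
        (∀ t : Fin ℓ, H' 2 t = Real.cos (posang ℓ (t:ℕ))) →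
        (∀ t : Fin ℓ, H' 3 t = Real.sin (posang ℓ (t:ℕ))) →
        (∀ t : Fin ℓ, H' 4 t = 1) →
        (∑ j : Fin D, (mkHead D ℓ M ε lam K K (j:ℕ)).eval H')
          = Matrix.of fun (i : Fin 5) (t : Fin ℓ) =>
            if h : i = 1 ∧ D ≤ (t:ℕ) ∧ (t:ℕ) < 2*D
            then lam * K * relu (ε * x ⟨(t:ℕ)-D, by obtain ⟨-, h1, h2⟩ := h; omega⟩)^2
            else 0 := by
      intro ε hε H' a0 a1 a2 a3 a4
      have he : ∀ j : Fin D, (mkHead D ℓ M ε lam K K (j:ℕ)).eval H'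
          = Matrix.of fun (i : Fin 5) (t : Fin ℓ) =>
            if i = 1 ∧ (t:ℕ) = D + (j:ℕ) then lam * K * relu (ε * x j)^2 else 0 :=
        fun j => mkHead_eval D ℓ hD hl M hM x hxM ε lam K K hε hlam hK j H' a0 a1 a2 a3 a4
      ext i t
      rw [Matrix.sum_apply, Matrix.of_apply]
      simp only [he, Matrix.of_apply]
      by_cases hi : i = 1
      · subst hi
        by_cases hc : D ≤ (t:ℕ) ∧ (t:ℕ) < 2*D
        · obtain ⟨hc1, hc2⟩ := hc
          rw [dif_pos ⟨rfl, hc1, hc2⟩]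
          rw [Finset.sum_eq_single (⟨(t:ℕ)-D, by omega⟩ : Fin D)]
          · rw [if_pos ⟨rfl, show (t:ℕ) = D + ((t:ℕ)-D) by omega⟩]
          · intro j _ hne
            rw [if_neg]
            rintro ⟨-, hteq⟩
            exact hne (Fin.ext (show (j:ℕ) = (t:ℕ)-D by omega))
          · intro hmem; exact absurd (Finset.mem_univ _) hmem
        · rw [dif_neg (by tauto)]
          refine Finset.sum_eq_zero fun j _ => ?_
          rw [if_neg]
          rintro ⟨-, hteq⟩
          exact hc ⟨by omega, by omega⟩
      · rw [dif_neg (fun hc => hi hc.1)]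
        exact Finset.sum_eq_zero fun j _ => by rw [if_neg (fun hc => hi hc.1)]
    -- first intermediate matrix
    set H1m : Matrix (Fin 5) (Fin ℓ) ℝ := Matrix.of (fun (i : Fin 5) (t : Fin ℓ) =>
      H i t + (if h : i = 1 ∧ D ≤ (t:ℕ) ∧ (t:ℕ) < 2*D
        then lam * K * relu ((1:ℝ) * x ⟨(t:ℕ)-D, by obtain ⟨-, h1, h2⟩ := h; omega⟩)^2
        else 0)) with hH1m
    have e1r : ∀ (i : Fin 5) (t : Fin ℓ), i ≠ 1 → H1m i t = H i t := by
      intro i t hi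
      rw [hH1m, Matrix.of_apply, dif_neg (fun hc => hi hc.1), add_zero]
    have e0lt : ∀ t : Fin ℓ, ∀ h : (t:ℕ) < D, H1m 0 t = x ⟨(t:ℕ), h⟩ :=
      fun t h => by rw [e1r 0 t (by decide)]; exact h0lt t h
    have e0ge : ∀ t : Fin ℓ, D ≤ (t:ℕ) → H1m 0 t = 0 :=
      fun t h => by rw [e1r 0 t (by decide)]; exact h0ge t h
    have e2 : ∀ t : Fin ℓ, H1m 2 t = Real.cos (posang ℓ (t:ℕ)) :=
      fun t => by rw [e1r 2 t (by decide)]; exact h2 t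
    have e3 : ∀ t : Fin ℓ, H1m 3 t = Real.sin (posang ℓ (t:ℕ)) :=
      fun t => by rw [e1r 3 t (by decide)]; exact h3 t
    have e4 : ∀ t : Fin ℓ, H1m 4 t = 1 :=
      fun t => by rw [e1r 4 t (by decide)]; exact hrow4 t
    -- second intermediate matrix
    set H2m : Matrix (Fin 5) (Fin ℓ) ℝ := Matrix.of (fun (i : Fin 5) (t : Fin ℓ) =>
      H i t + (if h : i = 1 ∧ D ≤ (t:ℕ) ∧ (t:ℕ) < 2*D
        then lam * K * (x ⟨(t:ℕ)-D, by obtain ⟨-, h1, h2⟩ := h; omega⟩)^2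
        else 0)) with hH2m
    refine ⟨N, ⟨fun j => mkHead D ℓ M 1 lam K K (j:ℕ), ffnZero N⟩,
      ⟨fun j => mkHead D ℓ M (-1) lam K K (j:ℕ), ffnZero N⟩,
      ⟨fun _ => ⟨0,0,0⟩, ffnSq N K u0 u1⟩, ?_, ?_, ?_, ?_⟩
    · rw [hRHS]
      refine sup_le (ciSup_le fun j => ?_) (le_trans (ffnZero_wnorm N hNpos) hK.le)
      exact mkHead_wnorm D ℓ M 1 lam K (j:ℕ) hM hK (by norm_num) hlam hlK hlE8
    · rw [hRHS]
      refine sup_le (ciSup_le fun j => ?_) (le_trans (ffnZero_wnorm N hNpos) hK.le)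
      exact mkHead_wnorm D ℓ M (-1) lam K (j:ℕ) hM hK (by norm_num) hlam hlK hlE8
    · rw [hRHS]
      refine sup_le (ciSup_le fun j => ?_)
        (ffnSq_wnorm N hNpos K u0 u1 hK hu0b hu1b)
      unfold Head.wnorm
      simp [matSup_zero, hK.le]
    · -- the evaluation identity
      have hB1 : (Block.mk (fun j => mkHead D ℓ M 1 lam K K (j:ℕ)) (ffnZero N)
          : Block 5 D N 6).eval H = H1m := by
        ext i t
        rw [block_eval_apply]
        show (ffnZero N).eval _ i + _ = _
        rw [ffnZero_eval, hsum 1 (by norm_num) H h0lt h0ge h2 h3 hrow4]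
        rw [hH1m]
        simp only [Matrix.add_apply, Matrix.of_apply]
        by_cases hc : i = 1 ∧ D ≤ (t:ℕ) ∧ (t:ℕ) < 2*D
        · simp only [dif_pos hc]; ring
        · simp only [dif_neg hc]; ring
      have hB2 : (Block.mk (fun j => mkHead D ℓ M (-1) lam K K (j:ℕ)) (ffnZero N)
          : Block 5 D N 6).eval H1m = H2m := by
        ext i t
        rw [block_eval_apply]
        show (ffnZero N).eval _ i + _ = _
        rw [ffnZero_eval, hsum (-1) (by norm_num) H1m e0lt e0ge e2 e3 e4]
        rw [hH1m, hH2m]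
        simp only [Matrix.add_apply, Matrix.of_apply]
        by_cases hc : i = 1 ∧ D ≤ (t:ℕ) ∧ (t:ℕ) < 2*D
        · simp only [dif_pos hc]
          obtain ⟨-, hc1, hc2⟩ := hc
          have := relu_sq_add_relu_neg_sq (x ⟨(t:ℕ)-D, by omega⟩)
          have h1 : ((1:ℝ)) * x ⟨(t:ℕ)-D, by omega⟩ = x ⟨(t:ℕ)-D, by omega⟩ := one_mul _
          have hm1 : ((-1:ℝ)) * x ⟨(t:ℕ)-D, by omega⟩ = -(x ⟨(t:ℕ)-D, by omega⟩) := by ring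
          rw [h1, hm1]
          linear_combination (lam*K) * this
        · simp only [dif_neg hc]; ring
      have hv1 : ∀ t : Fin ℓ, 0 ≤ H2m 1 t := by
        intro t
        rw [hH2m, Matrix.of_apply, hrow1 t, zero_add]
        by_cases hc : (1:Fin 5) = 1 ∧ D ≤ (t:ℕ) ∧ (t:ℕ) < 2*D
        · rw [dif_pos hc]; positivity
        · rw [dif_neg hc]
      have hB3 : (Block.mk (fun _ => (⟨0,0,0⟩ : Head 5)) (ffnSq N K u0 u1)
          : Block 5 D N 6).eval H2m = Matrix.of fun (i : Fin 5) (t : Fin ℓ) =>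
            if h : D ≤ (t : ℕ) ∧ (t : ℕ) < 2 * D then
              (if i = 0 then x ⟨(t : ℕ) - D, by omega⟩ ^ 2 else H i t)
            else H i t := by
        ext i t
        rw [block_eval_apply]
        simp only [zero_head_eval, Finset.sum_const, smul_zero, zero_add]
        show (ffnSq N K u0 u1).eval (fun r => H2m r t) i + H2m i t = _
        rw [ffnSq_eval N K u0 u1 hK.le (fun r => H2m r t) (hv1 t)]
        simp only [Matrix.of_apply]
        have h2m : ∀ i' : Fin 5, H2m i' t = H i' t
            + (if h : i' = 1 ∧ D ≤ (t:ℕ) ∧ (t:ℕ) < 2*D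
              then lam * K * (x ⟨(t:ℕ)-D, by obtain ⟨-, h1', h2'⟩ := h; omega⟩)^2
              else 0) := fun i' => by rw [hH2m]; rfl
        by_cases hr : D ≤ (t:ℕ) ∧ (t:ℕ) < 2*D
        · obtain ⟨hr1, hr2⟩ := hr
          rw [dif_pos ⟨hr1, hr2⟩]
          have h2m1 : H2m 1 t = lam * K * (x ⟨(t:ℕ)-D, by omega⟩)^2 := by
            rw [h2m 1, dif_pos ⟨rfl, hr1, hr2⟩, hrow1 t, zero_add]
          by_cases hi0 : i = 0
          · subst hi0
            rw [if_pos rfl, if_pos rfl, h2m 0, dif_neg (by simp), h0ge t hr1, h2m1]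
            linear_combination (lam*K*(x ⟨(t:ℕ)-D, by omega⟩)^2) * hu0T
              + ((x ⟨(t:ℕ)-D, by omega⟩)^2) * hccId
          · rw [if_neg hi0, if_neg hi0]
            by_cases hi1 : i = 1
            · subst hi1
              rw [if_pos rfl, h2m1, hrow1 t]
              linear_combination (-(lam*K*(x ⟨(t:ℕ)-D, by omega⟩)^2)) * hu1T
            · rw [if_neg hi1, h2m i, dif_neg (fun hc => hi1 hc.1), zero_add, add_zero]
        · rw [dif_neg hr]
          have h2mz : ∀ i' : Fin 5, H2m i' t = H i' t := by
            intro i'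
            rw [h2m i', dif_neg (fun hc => hr hc.2), add_zero]
          by_cases hi0 : i = 0
          · subst hi0
            rw [if_pos rfl, h2mz 0, h2mz 1, hrow1 t]
            ring
          · rw [if_neg hi0]
            by_cases hi1 : i = 1
            · subst hi1
              rw [if_pos rfl, h2mz 1, hrow1 t]
              ring
            · rw [if_neg hi1, h2mz i, zero_add]
      rw [hB1, hB2, hB3]

end
end Paper
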